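/- arXiv:2403.15043 — 2 statements merged into one kernel-verified Lean document; each statement's English description precedes it below -/
import Mathlib

section
/- For every integer p ≥ 1, the quantity ρ_p = 4π² · (2^{2p} - 1)/(2^{2(p+1)} - 1) · ζ(2p)/ζ(2p+2) satisfies ρ_p > π². -/
open Real

/-- The Riemann zeta function for real `s > 1`, `ζ(s) = ∑_{n ≥ 1} n^{-s}`. -/
noncomputable def zetaR (s : ℝ) : ℝ := ∑' n : ℕ, 1 / (n + 1 : ℝ) ^ s

lemma summable_zetaR {s : ℝ} (hs : 1 < s) :
    Summable (fun n : ℕ => 1 / (n + 1 : ℝ) ^ s) := by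
  have := Real.summable_one_div_nat_rpow.mpr hs
  have h := (summable_nat_add_iff 1).mpr this
  convert h using 2 with n
  · rfl
  · push_cast
    ring_nf


lemma summable_odd {s : ℝ} (hs : 1 < s) :
    Summable (fun k : ℕ => 1 / (2 * (k:ℝ) + 1) ^ s) := by
  have h := (summable_zetaR hs).comp_injective
    (mul_right_injective₀ (two_ne_zero (α := ℕ)))
  exact h.congr fun k => by
    simp only [Function.comp_apply]; push_cast; ring_nf

lemma lam_eq {s : ℝ} (hs : 1 < s) :
    (∑' k : ℕ, 1 / (2 * k + 1 : ℝ) ^ s) = (1 - (2:ℝ) ^ (-s)) * zetaR s := by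
  have hsum := summable_zetaR hs
  have he : Summable (fun k : ℕ => 1 / (2 * (k:ℝ) + 1) ^ s) := summable_odd hs
  have ho : (fun k : ℕ => 1 / ((2 * k + 1 : ℕ) + 1 : ℝ) ^ s)
      = fun k : ℕ => (2:ℝ) ^ (-s) * (1 / ((k:ℝ) + 1) ^ s) := by
    funext k
    have h2 : ((2 * k + 1 : ℕ) + 1 : ℝ) = 2 * ((k:ℝ) + 1) := by push_cast; ring
    rw [h2, Real.mul_rpow (by norm_num) (by positivity), Real.rpow_neg (by norm_num)]
    field_simp
  have hos : Summable (fun k : ℕ => 1 / ((2 * k + 1 : ℕ) + 1 : ℝ) ^ s) := by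
    rw [ho]; exact hsum.mul_left _
  have key := tsum_even_add_odd (f := fun n : ℕ => 1 / ((n:ℝ) + 1) ^ s)
    (by convert he using 2 with k; push_cast; ring_nf) hos
  have hodd : (∑' k : ℕ, 1 / ((2 * k + 1 : ℕ) + 1 : ℝ) ^ s) = (2:ℝ)^(-s) * zetaR s := by
    rw [ho, tsum_mul_left]; rfl
  have heven : (∑' k : ℕ, 1 / ((2 * k : ℕ) + 1 : ℝ) ^ s)
      = ∑' k : ℕ, 1 / (2 * (k:ℝ) + 1) ^ s := by
    congr 1; funext k; push_cast; ring_nf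
  rw [heven, hodd] at key
  have : zetaR s = ∑' n : ℕ, 1 / ((n:ℝ) + 1) ^ s := rfl
  linarith [key]

/-- For every integer `p ≥ 1`,
`ρ_p = 4π² (2^{2p}-1)/(2^{2(p+1)}-1) · ζ(2p)/ζ(2p+2) > π²`. -/
theorem rho_gt_pi_sq (p : ℕ) (hp : 1 ≤ p) :
    π ^ 2 <
      4 * π ^ 2 * (2 ^ (2 * p) - 1) / (2 ^ (2 * (p + 1)) - 1) *
        (zetaR (2 * p) / zetaR (2 * p + 2)) := by
  set s : ℝ := 2 * p with hs_def
  have hs1 : 1 < s := by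
    have : (1:ℝ) ≤ p := by exact_mod_cast hp
    simp only [hs_def]; nlinarith
  have hs2 : 1 < s + 2 := by linarith
  -- strict decrease of lambda
  have hlam : (∑' k : ℕ, 1 / (2 * k + 1 : ℝ) ^ (s + 2))
      < ∑' k : ℕ, 1 / (2 * k + 1 : ℝ) ^ s := by
    have he : Summable (fun k : ℕ => 1 / (2 * (k:ℝ) + 1) ^ s) := summable_odd hs1
    refine Summable.tsum_lt_tsum (i := 1) (fun k => ?_) ?_ ?_ he
    · have h1 : (1:ℝ) ≤ 2 * k + 1 := by have := Nat.cast_nonneg (α := ℝ) k; linarith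
      have := Real.rpow_le_rpow_of_exponent_le h1 (by linarith : s ≤ s + 2)
      have hpos : (0:ℝ) < (2 * (k:ℝ) + 1) ^ s := Real.rpow_pos_of_pos (by positivity) _
      exact one_div_le_one_div_of_le hpos this
    · have h1 : (1:ℝ) < 2 * (1:ℕ) + 1 := by norm_num
      have := Real.rpow_lt_rpow_of_exponent_lt h1 (by linarith : s < s + 2)
      have hpos : (0:ℝ) < (2 * ((1:ℕ):ℝ) + 1) ^ s := Real.rpow_pos_of_pos (by positivity) _
      exact one_div_lt_one_div_of_lt hpos this
    · exact summable_odd hs2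
  have h1 := lam_eq hs1
  have h2 := lam_eq hs2
  -- positivity of lambda(s+2)
  have hlp : 0 < ∑' k : ℕ, 1 / (2 * k + 1 : ℝ) ^ (s + 2) := by
    have hos : Summable (fun k : ℕ => 1 / (2 * (k:ℝ) + 1) ^ (s + 2)) := summable_odd hs2
    refine Summable.tsum_pos hos (fun k => by positivity) 0 (by positivity)
  -- rewrite rpow of 2 in terms of nat pow
  have hA : (2:ℝ) ^ (-s) = 1 / (2:ℝ) ^ (2 * p) := by
    rw [Real.rpow_neg (by norm_num), hs_def]
    rw [show (2 * (p:ℝ)) = ((2 * p : ℕ) : ℝ) by push_cast; ring, Real.rpow_natCast]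
    exact inv_eq_one_div _
  have hB : (2:ℝ) ^ (-(s + 2)) = 1 / (2:ℝ) ^ (2 * (p + 1)) := by
    rw [Real.rpow_neg (by norm_num), hs_def]
    rw [show (2 * (p:ℝ) + 2) = ((2 * (p + 1) : ℕ) : ℝ) by push_cast; ring, Real.rpow_natCast]
    exact inv_eq_one_div _
  rw [hA] at h1; rw [hB] at h2
  set A : ℝ := (2:ℝ) ^ (2 * p) with hA_def
  have hA4 : (4:ℝ) ≤ A := by
    calc (4:ℝ) = 2 ^ 2 := by norm_num
    _ ≤ 2 ^ (2 * p) := by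
      apply pow_le_pow_right₀ (by norm_num); omega
  have hB_eq : (2:ℝ) ^ (2 * (p + 1)) = 4 * A := by
    rw [hA_def, show 2 * (p + 1) = 2 * p + 2 by ring, pow_add]; ring
  rw [hB_eq] at h2
  set ζ1 := zetaR s
  set ζ2 := zetaR (s + 2)
  have hζ2pos : 0 < ζ2 := by
    have h14 : 1/(4*A) ≤ 1/16 := by
      apply one_div_le_one_div_of_le <;> linarith
    nlinarith [h2, hlp, h14]
  rw [hB_eq]
  have hApos : (0:ℝ) < A := by linarith
  have hπ : (0:ℝ) < π ^ 2 := by positivity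
  -- key inequality: (4A-1) ζ2 < 4 (A-1) ζ1
  have key : (4 * A - 1) * ζ2 < 4 * (A - 1) * ζ1 := by
    have e1 : 4 * (A - 1) * ζ1 = 4 * A * ((1 - 1/A) * ζ1) := by field_simp; try ring
    have e2 : (4 * A - 1) * ζ2 = 4 * A * ((1 - 1/(4*A)) * ζ2) := by field_simp; try ring
    rw [e1, e2, ← h1, ← h2]
    nlinarith [hlam]
  have h4A : (0:ℝ) < 4 * A - 1 := by linarith
  rw [div_mul_eq_mul_div, lt_div_iff₀ h4A, mul_div_assoc', lt_div_iff₀ hζ2pos]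
  nlinarith [mul_lt_mul_of_pos_left key hπ]
end

section
/- For all integers p ≥ 1 and 0 ≤ k ≤ p, and all θ ∈ [-π, π], the function D_p^k(θ) = (-1)^k (2 - 2cos θ)^{p+1} ∑_{j∈ℤ} 1/(θ + 2jπ)^{2(p+1-k)} (extended by its limit at θ where the formula degenerates) satisfies D_p^k(0) = 0 for k ≥ 1, D_p^0(0) = 1, and D_p^k(π) = (-1)^k 2^{2k+1} (2^{2(p+1-k)} - 1)/π^{2(p+1-k)} · ζ(2(p+1-k)). -/
open Real Filter

/-- The symbol `D_p^k(θ) = (-1)^k (2 - 2cos θ)^{p+1} ∑_{j∈ℤ} (θ + 2jπ)^{-2(p+1-k)}`. -/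
noncomputable def Dpk (p k : ℕ) (θ : ℝ) : ℝ :=
  (-1) ^ k * (2 - 2 * Real.cos θ) ^ (p + 1) *
    ∑' j : ℤ, 1 / (θ + 2 * j * π) ^ (2 * (p + 1 - k))

lemma key_bound (m : ℕ) {θ : ℝ} (hθ : |θ| ≤ π) {j : ℤ} (hj : j ≠ 0) :
    ‖1 / (θ + 2 * j * π) ^ (2 * m)‖ ≤ (1 / π ^ (2 * m)) * (1 / (j : ℝ) ^ (2 * m)) := by
  have hπ := Real.pi_pos
  have hj1 : (1 : ℝ) ≤ |(j : ℝ)| := by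
    have : (1 : ℤ) ≤ |j| := Int.one_le_abs hj
    calc (1:ℝ) ≤ ((|j| : ℤ) : ℝ) := by exact_mod_cast this
    _ = |(j:ℝ)| := by push_cast; ring
  have h1 : π * |(j : ℝ)| ≤ |θ + 2 * j * π| := by
    have h2 : |(2 : ℝ) * j * π| - |θ| ≤ |θ + 2 * j * π| := by
      have h4 := abs_add_le (θ + 2 * j * π) (-θ)
      rw [show θ + 2 * (j : ℝ) * π + -θ = 2 * j * π from by ring, abs_neg] at h4
      linarith
    have h3 : |(2 : ℝ) * j * π| = 2 * |(j:ℝ)| * π := by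
      rw [abs_mul, abs_mul]
      simp [abs_of_nonneg hπ.le, abs_of_nonneg, abs_two]
    nlinarith [abs_nonneg (j:ℝ)]
  have hpos : 0 < π * |(j : ℝ)| := by positivity
  have habs : (j : ℝ) ^ (2 * m) = |(j : ℝ)| ^ (2 * m) := by
    rw [pow_mul, pow_mul, sq_abs]
  rw [habs, one_div_mul_one_div, ← mul_pow]
  rw [norm_div, norm_one, norm_pow, Real.norm_eq_abs]
  gcongr
  
lemma summable_shift (m : ℕ) (hm : 1 ≤ m) {θ : ℝ} (hθ : |θ| ≤ π) :
    Summable (fun j : ℤ => 1 / (θ + 2 * j * π) ^ (2 * m)) := by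
  apply Summable.of_norm_bounded_eventually
    (g := fun j : ℤ => (1 / π ^ (2 * m)) * (1 / (j : ℝ) ^ (2 * m)))
  · exact (Real.summable_one_div_int_pow.mpr (by omega)).mul_left _
  · have : {(0 : ℤ)}ᶜ ∈ Filter.cofinite := by
      rw [Filter.mem_cofinite, compl_compl]; exact Set.finite_singleton 0
    filter_upwards [this] with j hj
    exact key_bound m hθ hj

lemma tendsto_ratio :
    Tendsto (fun θ : ℝ => (2 - 2 * Real.cos θ) / θ ^ 2) (nhdsWithin 0 {(0:ℝ)}ᶜ) (nhds 1) := by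
  have hs : Tendsto (fun x : ℝ => Real.sin x / x) (nhdsWithin 0 {(0:ℝ)}ᶜ) (nhds 1) := by
    have h := Real.hasDerivAt_sin 0
    rw [Real.cos_zero] at h
    have h2 := hasDerivAt_iff_tendsto_slope.mp h
    refine h2.congr fun x => ?_
    simp [slope_fun_def]
    ring
  have h2 : Tendsto (fun θ : ℝ => θ / 2) (nhdsWithin 0 {(0:ℝ)}ᶜ) (nhdsWithin 0 {(0:ℝ)}ᶜ) := by
    rw [tendsto_nhdsWithin_iff]
    constructor
    · have : Tendsto (fun θ : ℝ => θ / 2) (nhds 0) (nhds 0) := by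
        simpa using (continuous_id.div_const (2:ℝ)).tendsto 0
      exact this.mono_left nhdsWithin_le_nhds
    · filter_upwards [self_mem_nhdsWithin] with θ hθ
      simp only [Set.mem_compl_iff, Set.mem_singleton_iff] at hθ ⊢
      exact div_ne_zero hθ two_ne_zero
  have h3 : Tendsto (fun θ : ℝ => (Real.sin (θ/2) / (θ/2)) ^ 2)
      (nhdsWithin 0 {(0:ℝ)}ᶜ) (nhds 1) := by
    have := (hs.pow 2).comp h2
    simpa [Function.comp_def] using this
  refine h3.congr' ?_
  filter_upwards [self_mem_nhdsWithin] with θ hθ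
  simp only [Set.mem_compl_iff, Set.mem_singleton_iff] at hθ
  have hcos : Real.cos θ = 2 * Real.cos (θ/2) ^ 2 - 1 := by
    have := Real.cos_two_mul (θ/2)
    rwa [show 2 * (θ/2) = θ by ring] at this
  have hsc := Real.sin_sq_add_cos_sq (θ/2)
  have hθ2 : θ ^ 2 ≠ 0 := pow_ne_zero _ hθ
  field_simp
  nlinarith [hsc, hcos]

/-- The limit lemma covering both limit statements. -/
lemma limit_lemma (m k : ℕ) (hm : 1 ≤ m) :
    Tendsto (fun θ : ℝ => (-1:ℝ)^k * (2 - 2 * Real.cos θ) ^ (m + k) *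
        ∑' j : ℤ, 1 / (θ + 2 * j * π) ^ (2 * m))
      (nhdsWithin 0 {(0:ℝ)}ᶜ) (nhds ((-1:ℝ)^k * (0:ℝ)^k)) := by
  have hπ := Real.pi_pos
  set T : ℝ → ℝ := fun θ => ∑' j : ℤ, if j = 0 then 0 else 1 / (θ + 2 * j * π) ^ (2 * m) with hT
  set C0 : ℝ := ∑' j : ℤ, (1 / π ^ (2 * m)) * (1 / (j : ℝ) ^ (2 * m)) with hC0
  have hgsum : Summable (fun j : ℤ => (1 / π ^ (2 * m)) * (1 / (j : ℝ) ^ (2 * m))) :=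
    (Real.summable_one_div_int_pow.mpr (by omega)).mul_left _
  -- bound on T
  have hTbound : ∀ θ : ℝ, |θ| ≤ π → ‖T θ‖ ≤ C0 := by
    intro θ hθ
    apply tsum_of_norm_bounded hgsum.hasSum
    intro j
    by_cases hj : j = 0
    · subst hj
      simp
      positivity
    · simp only [if_neg hj]
      exact key_bound m hθ hj
  -- eventual equality
  have heq : (fun θ : ℝ =>
      (-1:ℝ)^k * (2 - 2 * Real.cos θ) ^ (m + k) * ∑' j : ℤ, 1 / (θ + 2 * j * π) ^ (2 * m))
      =ᶠ[nhdsWithin 0 {(0:ℝ)}ᶜ] (fun θ : ℝ =>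
      (-1:ℝ)^k * ((2 - 2 * Real.cos θ) / θ ^ 2) ^ m * (2 - 2 * Real.cos θ) ^ k +
      (-1:ℝ)^k * (2 - 2 * Real.cos θ) ^ (m + k) * T θ) := by
    have hball : ∀ᶠ θ : ℝ in nhds 0, |θ| ≤ π := by
      filter_upwards [Metric.ball_mem_nhds (0:ℝ) hπ] with θ hθ
      rw [Metric.mem_ball, Real.dist_eq, sub_zero] at hθ
      exact hθ.le
    filter_upwards [hball.filter_mono nhdsWithin_le_nhds, self_mem_nhdsWithin] with θ hθabs hθ0
    simp only [Set.mem_compl_iff, Set.mem_singleton_iff] at hθ0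
    have hsum := summable_shift m hm hθabs
    rw [hsum.tsum_eq_add_tsum_ite 0]
    simp only [Int.cast_zero, mul_zero, zero_mul, add_zero]
    have hTθ : T θ = ∑' (n : ℤ), if n = 0 then 0 else 1 / (θ + 2 * (n:ℝ) * π) ^ (2 * m) := rfl
    rw [hTθ]
    have hθ2 : θ ^ 2 ≠ 0 := pow_ne_zero _ hθ0
    rw [div_pow, ← pow_mul, pow_add]
    ring
  -- limit of the second piece
  have hB : Tendsto (fun θ : ℝ => (-1:ℝ)^k * (2 - 2 * Real.cos θ) ^ (m + k) * T θ)
      (nhdsWithin 0 {(0:ℝ)}ᶜ) (nhds 0) := by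
    apply squeeze_zero_norm' (a := fun θ : ℝ => (2 - 2 * Real.cos θ) ^ (m + k) * C0)
    · have hball : ∀ᶠ θ : ℝ in nhds 0, |θ| ≤ π := by
        filter_upwards [Metric.ball_mem_nhds (0:ℝ) hπ] with θ hθ
        rw [Metric.mem_ball, Real.dist_eq, sub_zero] at hθ
        exact hθ.le
      filter_upwards [hball.filter_mono nhdsWithin_le_nhds] with θ hθabs
      have hc : (0:ℝ) ≤ 2 - 2 * Real.cos θ := by nlinarith [Real.cos_le_one θ]
      rw [norm_mul, norm_mul, norm_pow, norm_pow, norm_neg, norm_one, one_pow, one_mul,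
        Real.norm_eq_abs (2 - 2 * Real.cos θ), abs_of_nonneg hc]
      exact mul_le_mul_of_nonneg_left (hTbound θ hθabs) (by positivity)
    · have hcont : Tendsto (fun θ : ℝ => (2 - 2 * Real.cos θ) ^ (m + k) * C0) (nhds 0)
          (nhds ((2 - 2 * Real.cos 0) ^ (m + k) * C0)) := by
        exact (((continuous_const.sub (continuous_const.mul Real.continuous_cos)).pow
          (m + k)).mul continuous_const).tendsto 0
      have : ((2:ℝ) - 2 * Real.cos 0) ^ (m + k) * C0 = 0 := by
        simp [Real.cos_zero]
        left; omega
      rw [this] at hcont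
      exact hcont.mono_left nhdsWithin_le_nhds
  -- limit of the first piece
  have hA : Tendsto (fun θ : ℝ => (-1:ℝ)^k * ((2 - 2 * Real.cos θ) / θ ^ 2) ^ m *
      (2 - 2 * Real.cos θ) ^ k) (nhdsWithin 0 {(0:ℝ)}ᶜ) (nhds ((-1:ℝ)^k * (0:ℝ)^k)) := by
    have h1 : Tendsto (fun θ : ℝ => (-1:ℝ)^k * ((2 - 2 * Real.cos θ) / θ ^ 2) ^ m)
        (nhdsWithin 0 {(0:ℝ)}ᶜ) (nhds ((-1:ℝ)^k)) := by
      have := (tendsto_ratio.pow m).const_mul ((-1:ℝ)^k)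
      simpa using this
    have h2 : Tendsto (fun θ : ℝ => (2 - 2 * Real.cos θ) ^ k)
        (nhdsWithin 0 {(0:ℝ)}ᶜ) (nhds ((0:ℝ)^k)) := by
      have : Tendsto (fun θ : ℝ => (2 - 2 * Real.cos θ) ^ k) (nhds 0)
          (nhds ((2 - 2 * Real.cos 0) ^ k)) :=
        ((continuous_const.sub (continuous_const.mul Real.continuous_cos)).pow k).tendsto 0
      simpa [Real.cos_zero] using this.mono_left nhdsWithin_le_nhds
    exact h1.mul h2
  have := hA.add hB
  rw [add_zero] at this
  exact this.congr' heq.symm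

/-- For `1 ≤ p` and `k ≤ p`: the function `D_p^k` (extended by its limit at `0`) satisfies
`D_p^k(0) = 0` for `k ≥ 1`, `D_p^0(0) = 1`, and
`D_p^k(π) = (-1)^k 2^{2k+1} (2^{2(p+1-k)} - 1)/π^{2(p+1-k)} · ζ(2(p+1-k))`. -/
theorem Dpk_values (p k : ℕ) (hp : 1 ≤ p) (hk : k ≤ p) :
    (1 ≤ k → Tendsto (Dpk p k) (nhdsWithin 0 {(0 : ℝ)}ᶜ) (nhds 0)) ∧
    (k = 0 → Tendsto (Dpk p k) (nhdsWithin 0 {(0 : ℝ)}ᶜ) (nhds 1)) ∧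
    Dpk p k π =
      (-1) ^ k * 2 ^ (2 * k + 1) * (2 ^ (2 * (p + 1 - k)) - 1) / π ^ (2 * (p + 1 - k)) *
        zetaR (2 * (p + 1 - k)) := by
  have hπ := Real.pi_pos
  set m := p + 1 - k with hmdef
  have hm : 1 ≤ m := by omega
  have hmk : m + k = p + 1 := by omega
  have hfun : Dpk p k = fun θ : ℝ => (-1:ℝ)^k * (2 - 2 * Real.cos θ) ^ (m + k) *
      ∑' j : ℤ, 1 / (θ + 2 * j * π) ^ (2 * m) := by
    funext θ; rw [Dpk, hmk]
  refine ⟨?_, ?_, ?_⟩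
  · intro hk1
    have h := limit_lemma m k hm
    rw [zero_pow (show k ≠ 0 by omega), mul_zero] at h
    rw [hfun]; exact h
  · intro hk0
    subst hk0
    rw [hfun]
    simpa using limit_lemma m 0 hm
  · -- value at π
    -- notation
    set Z : ℝ := ∑' n : ℕ, 1 / ((n:ℝ) + 1) ^ (2 * m) with hZ
    have hzeta : zetaR (2 * ((p:ℝ) + 1 - (k:ℝ))) = Z := by
      have harg : (2 : ℝ) * ((p:ℝ) + 1 - (k:ℝ)) = ((2 * m : ℕ) : ℝ) := by
        rw [hmdef, Nat.cast_mul, Nat.cast_sub (show k ≤ p + 1 by omega)]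
        push_cast; ring
      rw [harg, zetaR, hZ]
      refine tsum_congr fun n => ?_
      rw [Real.rpow_natCast]
    -- summability of basic series
    have hshift : Summable (fun n : ℕ => 1 / ((n:ℝ) + 1) ^ (2 * m)) := by
      have h1 : Summable (fun n : ℕ => 1 / (((n + 1 : ℕ)):ℝ) ^ (2 * m)) :=
        (summable_nat_add_iff (f := fun n : ℕ => 1 / ((n:ℕ):ℝ) ^ (2 * m)) 1).mpr
          (Real.summable_one_div_nat_pow.mpr (by omega))
      refine h1.congr fun n => ?_
      push_cast; ring
    have hoddnat : Summable (fun n : ℕ => 1 / (2 * (n:ℝ) + 1) ^ (2 * m)) := by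
      refine Summable.of_nonneg_of_le (fun n => by positivity) (fun n => ?_) hshift
      have hb : (0:ℝ) < (n:ℝ) + 1 := by positivity
      have hab : (n:ℝ) + 1 ≤ 2 * (n:ℝ) + 1 := by
        have : (0:ℝ) ≤ (n:ℝ) := n.cast_nonneg
        linarith
      gcongr
    -- f = 1 / n ^ (2m) on ℕ
    set f : ℕ → ℝ := fun n => 1 / (n:ℝ) ^ (2 * m) with hf
    have hf1 : (fun n : ℕ => f (n + 1)) = fun n : ℕ => 1 / ((n:ℝ) + 1) ^ (2 * m) := by
      funext n; rw [hf]; push_cast; ring_nf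
    have hfs : Summable f :=
      (summable_nat_add_iff (f := f) 1).mp (by rw [hf1]; exact hshift)
    have hT0 : ∑' n : ℕ, f n = Z := by
      rw [tsum_eq_zero_add' (by rw [hf1]; exact hshift)]
      rw [hf1, ← hZ]
      simp [hf, zero_pow (show 2 * m ≠ 0 by omega)]
    have hodd_eq : (fun n : ℕ => f (2 * n + 1)) = fun n : ℕ => 1 / (2 * (n:ℝ) + 1) ^ (2 * m) := by
      funext n; rw [hf]; push_cast; ring_nf
    have heven : ∑' n : ℕ, f (2 * n) = (1 / 2 ^ (2 * m)) * Z := by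
      have : (fun n : ℕ => f (2 * n)) = fun n : ℕ => (1 / 2 ^ (2 * m)) * f n := by
        funext n; rw [hf]; push_cast
        rw [mul_pow, one_div_mul_one_div]
      rw [this, tsum_mul_left, hT0]
    have hesumm : Summable (fun n : ℕ => f (2 * n)) :=
      hfs.comp_injective (fun a b h => by omega)
    have hosumm : Summable (fun n : ℕ => f (2 * n + 1)) :=
      hfs.comp_injective (fun a b h => by omega)
    have hoddval : ∑' n : ℕ, 1 / (2 * (n:ℝ) + 1) ^ (2 * m) = (1 - 1 / 2 ^ (2 * m)) * Z := by
      have h := tsum_even_add_odd hesumm hosumm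
      rw [heven, hT0, hodd_eq] at h
      linear_combination h
    -- integer odd sum
    have hneg : ∀ x : ℝ, 1 / (2 * (-(x + 1)) + 1) ^ (2 * m)
        = 1 / (2 * x + 1) ^ (2 * m) := by
      intro x
      rw [show 2 * (-(x + 1)) + 1 = -(2 * x + 1) by ring, Even.neg_pow (even_two_mul m)]
    have hZint : ∑' j : ℤ, 1 / (2 * (j:ℝ) + 1) ^ (2 * m)
        = 2 * ∑' n : ℕ, 1 / (2 * (n:ℝ) + 1) ^ (2 * m) := by
      rw [tsum_of_nat_of_neg_add_one (f := fun j : ℤ => 1 / (2 * (j:ℝ) + 1) ^ (2 * m))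
        (hoddnat.congr fun n => by push_cast; ring)
        (hoddnat.congr fun n => by push_cast; exact (hneg _).symm)]
      have e1 : ∑' n : ℕ, 1 / (2 * (((n:ℤ)):ℝ) + 1) ^ (2 * m)
          = ∑' n : ℕ, 1 / (2 * (n:ℝ) + 1) ^ (2 * m) :=
        tsum_congr fun n => by push_cast; ring
      have e2 : ∑' n : ℕ, 1 / (2 * (((-((n:ℤ) + 1)):ℤ):ℝ) + 1) ^ (2 * m)
          = ∑' n : ℕ, 1 / (2 * (n:ℝ) + 1) ^ (2 * m) :=
        tsum_congr fun n => by push_cast; exact hneg _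
      rw [e1, e2]
      ring
    -- evaluate Dpk at π
    have hterm : ∀ j : ℤ, 1 / (π + 2 * (j:ℝ) * π) ^ (2 * m)
        = (1 / π ^ (2 * m)) * (1 / (2 * (j:ℝ) + 1) ^ (2 * m)) := by
      intro j
      have hj : (2 * (j:ℝ) + 1) ≠ 0 := by
        have h0 : ((2 * j + 1 : ℤ) : ℝ) ≠ 0 := Int.cast_ne_zero.mpr (by omega)
        push_cast at h0
        exact h0
      rw [show π + 2 * (j:ℝ) * π = (2 * (j:ℝ) + 1) * π by ring, mul_pow,
        one_div_mul_one_div, mul_comm (π ^ (2 * m))]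
    simp only [hfun]
    have hcos : (2 : ℝ) - 2 * Real.cos π = 4 := by rw [Real.cos_pi]; norm_num
    rw [hcos, tsum_congr hterm, tsum_mul_left, hZint, hoddval, hzeta]
    have h4 : (4:ℝ) ^ (m + k) = 2 ^ (2 * m) * 2 ^ (2 * k) := by
      rw [show (4:ℝ) = 2 ^ 2 by norm_num, ← pow_mul, ← pow_add]
      congr 1; omega
    rw [h4]
    have h2m : (2:ℝ) ^ (2 * m) ≠ 0 := by positivity
    have hπm : π ^ (2 * m) ≠ 0 := by positivity
    field_simp
    ring
end
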